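/- Let v ∈ ℝ^q, let (x^v, z^v) be an optimal solution of (P(v)) and let w^v be an optimal solution of (D(v)). Then: (a) if v ∉ P, then z^v ≠ 0 and w^v ≠ 0; (b) if v ∈ bd P, then z^v = 0; (c) if v ∈ int P, then z^v = 0 and w^v = 0. In particular, v ∈ P if and only if z^v = 0. -/

import Mathlib

open Set Pointwise

noncomputable section

/-- Dot product on `Fin q → ℝ`. -/
def dotp {q : ℕ} (w y : Fin q → ℝ) : ℝ := ∑ i, w i * y i

/-- `N` is a norm on `Fin q → ℝ`. -/
def IsNormFn {q : ℕ} (N : (Fin q → ℝ) → ℝ) : Prop :=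
  (∀ z, N z = 0 ↔ z = 0) ∧ (∀ (a : ℝ) (z : Fin q → ℝ), N (a • z) = |a| * N z) ∧
    (∀ z w, N (z + w) ≤ N z + N w)

/-- Dual norm of `N`. -/
def dualNormFn {q : ℕ} (N : (Fin q → ℝ) → ℝ) (w : Fin q → ℝ) : ℝ :=
  sSup ((fun z => dotp w z) '' {z | N z ≤ 1})

/-- Distance (w.r.t. the norm `N`) from a point to a set. -/
def distFn {q : ℕ} (N : (Fin q → ℝ) → ℝ) (v : Fin q → ℝ) (A : Set (Fin q → ℝ)) : ℝ :=
  sInf ((fun y => N (v - y)) '' A)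

/-- Dual cone of a set. -/
def dualCone' {q : ℕ} (C : Set (Fin q → ℝ)) : Set (Fin q → ℝ) :=
  {w | ∀ y ∈ C, 0 ≤ dotp w y}

/-- characterization of the cases `zv = 0` for optimal solutions of
(P(v)) and (D(v)). -/
theorem stmt5 {q n : ℕ}
    (N : (Fin q → ℝ) → ℝ) (hN : IsNormFn N)
    (C : Set (Fin q → ℝ))
    (hCclosed : IsClosed C) (hCconv : Convex ℝ C)
    (hCcone : ∀ t : ℝ, 0 ≤ t → ∀ y ∈ C, t • y ∈ C)
    (hCsolid : (interior C).Nonempty)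
    (hCpointed : ∀ y ∈ C, -y ∈ C → y = 0)
    (hCnontriv : {(0 : Fin q → ℝ)} ⊂ C ∧ C ⊂ Set.univ)
    (X : Set (Fin n → ℝ)) (hX : IsCompact X) (hXconv : Convex ℝ X)
    (hXint : (interior X).Nonempty)
    (Γ : (Fin n → ℝ) → (Fin q → ℝ)) (hΓ : ContinuousOn Γ X)
    (hΓconv : ∀ x₁ ∈ X, ∀ x₂ ∈ X, ∀ t : ℝ, t ∈ Icc (0:ℝ) 1 →
      t • Γ x₁ + (1 - t) • Γ x₂ - Γ (t • x₁ + (1 - t) • x₂) ∈ C)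
    (v : Fin q → ℝ) (xv : Fin n → ℝ) (zv : Fin q → ℝ) (wv : Fin q → ℝ)
    (hxv : xv ∈ X) (hfeas : v + zv - Γ xv ∈ C)
    (hzopt : N zv = distFn N v (Γ '' X + C))
    (hwv : wv ∈ dualCone' C) (hwnorm : dualNormFn N wv ≤ 1)
    (hwopt : sInf ((fun x => dotp wv (Γ x)) '' X) - dotp wv v
      = distFn N v (Γ '' X + C)) :
    (v ∉ Γ '' X + C → zv ≠ 0 ∧ wv ≠ 0) ∧
    (v ∈ frontier (Γ '' X + C) → zv = 0) ∧
    (v ∈ interior (Γ '' X + C) → zv = 0 ∧ wv = 0) ∧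
    (v ∈ Γ '' X + C ↔ zv = 0) := by
  obtain ⟨hN0, hNsmul, hNadd⟩ := hN
  have hNneg : ∀ z, N (-z) = N z := by
    intro z
    have := hNsmul (-1) z
    simpa using this
  have hNnonneg : ∀ z, 0 ≤ N z := by
    intro z
    have h0 : N (0 : Fin q → ℝ) = 0 := (hN0 0).mpr rfl
    have h1 : N (z + (-z)) ≤ N z + N (-z) := hNadd z (-z)
    rw [add_neg_cancel, h0, hNneg] at h1
    linarith
  -- membership of v in P from zv = 0
  have hvP_of_z0 : zv = 0 → v ∈ Γ '' X + C := by
    intro h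
    have hc : v - Γ xv ∈ C := by simpa [h] using hfeas
    exact Set.mem_add.mpr ⟨Γ xv, ⟨xv, hxv, rfl⟩, v - Γ xv, hc, by abel⟩
  -- distance is zero when v ∈ P
  have hz0_of_vP : v ∈ Γ '' X + C → zv = 0 := by
    intro hv
    have hmem : (0 : ℝ) ∈ (fun y => N (v - y)) '' (Γ '' X + C) := by
      refine ⟨v, hv, by simp [(hN0 0).mpr rfl]⟩
    have hlb : ∀ a ∈ (fun y => N (v - y)) '' (Γ '' X + C), (0 : ℝ) ≤ a := by
      rintro a ⟨y, -, rfl⟩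
      exact hNnonneg _
    have hd : distFn N v (Γ '' X + C) = 0 := by
      refine le_antisymm ?_ (le_csInf ⟨0, hmem⟩ hlb)
      exact csInf_le ⟨0, hlb⟩ hmem
    have : N zv = 0 := by rw [hzopt, hd]
    exact (hN0 zv).mp this
  have hXne : X.Nonempty := hXint.mono interior_subset
  have hPclosed : IsClosed (Γ '' X + C) :=
    hCclosed.add_left_of_isCompact (hX.image_of_continuousOn hΓ)
  refine ⟨?_, ?_, ?_, hz0_of_vP, hvP_of_z0⟩
  · -- (a)
    intro hv
    refine ⟨fun h => hv (hvP_of_z0 h), fun h => ?_⟩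
    apply hv
    apply hvP_of_z0
    have hdot : ∀ y : Fin q → ℝ, dotp wv y = 0 := by
      intro y; simp [dotp, h]
    have himg : (fun x => dotp wv (Γ x)) '' X = {(0 : ℝ)} := by
      have : (fun x => dotp wv (Γ x)) = fun _ => (0 : ℝ) := by
        funext x; exact hdot _
      rw [this]
      exact hXne.image_const 0
    have hd : distFn N v (Γ '' X + C) = 0 := by
      rw [← hwopt, himg, hdot]; simp
    have : N zv = 0 := by rw [hzopt, hd]
    exact (hN0 zv).mp this
  · -- (b)
    intro hv
    exact hz0_of_vP (hPclosed.closure_eq ▸ frontier_subset_closure hv)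
  · -- (c)
    intro hv
    have hz0 : zv = 0 := hz0_of_vP (interior_subset hv)
    refine ⟨hz0, ?_⟩
    by_contra hw
    -- d = 0
    have hd : distFn N v (Γ '' X + C) = 0 := by
      rw [← hzopt, hz0, (hN0 0).mpr rfl]
    have hinf : sInf ((fun x => dotp wv (Γ x)) '' X) = dotp wv v := by
      have := hwopt
      rw [hd, sub_eq_zero] at this
      exact this
    -- ball inside P
    obtain ⟨ε, hε, hball⟩ := Metric.mem_nhds_iff.mp (mem_interior_iff_mem_nhds.mp hv)
    set t : ℝ := ε / (2 * (‖wv‖ + 1)) with ht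
    have hwnorm_pos : (0:ℝ) < ‖wv‖ + 1 := by positivity
    have htpos : 0 < t := by positivity
    have hpP : v - t • wv ∈ Γ '' X + C := by
      apply hball
      rw [Metric.mem_ball, dist_eq_norm]
      have : v - t • wv - v = -(t • wv) := by abel
      rw [this, norm_neg, norm_smul, Real.norm_eq_abs, abs_of_pos htpos]
      calc t * ‖wv‖ ≤ t * (‖wv‖ + 1) := by nlinarith [norm_nonneg wv]
        _ = ε / 2 := by rw [ht]; field_simp <;> ring
        _ < ε := by linarith
    obtain ⟨a, ⟨x, hx, rfl⟩, c, hc, hsum⟩ := hpP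
    have hdotadd : ∀ y z : Fin q → ℝ, dotp wv (y + z) = dotp wv y + dotp wv z := by
      intro y z
      simp [dotp, mul_add, Finset.sum_add_distrib]
    have hdotsum : dotp wv (Γ x) + dotp wv c = dotp wv v - t * dotp wv wv := by
      have h1 : dotp wv (Γ x) + dotp wv c = dotp wv (v - t • wv) := by
        rw [← hdotadd]; exact congrArg (dotp wv) hsum
      have h2 : dotp wv (v - t • wv) = dotp wv v - t * dotp wv wv := by
        unfold dotp
        rw [Finset.mul_sum, ← Finset.sum_sub_distrib]
        apply Finset.sum_congr rfl
        intro i _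
        simp [Pi.sub_apply]
        ring
      rw [h2] at h1
      exact h1
    have hcnn : 0 ≤ dotp wv c := hwv c hc
    have hΓle : dotp wv (Γ x) ≤ dotp wv v - t * dotp wv wv := by linarith
    -- bddBelow of the image
    have hcont : ContinuousOn (fun x => dotp wv (Γ x)) X := by
      have hc2 : Continuous (fun y : Fin q → ℝ => dotp wv y) := by
        unfold dotp
        exact continuous_finset_sum _ fun i _ => continuous_const.mul (continuous_apply i)
      exact hc2.comp_continuousOn hΓ
    have hbdd : BddBelow ((fun x => dotp wv (Γ x)) '' X) :=
      (hX.image_of_continuousOn hcont).bddBelow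
    have hle : sInf ((fun x => dotp wv (Γ x)) '' X) ≤ dotp wv (Γ x) :=
      csInf_le hbdd ⟨x, hx, rfl⟩
    rw [hinf] at hle
    have hww : 0 < dotp wv wv := by
      have hne : ∃ i, wv i ≠ 0 := by
        by_contra h
        push_neg at h
        exact hw (funext h)
      obtain ⟨i, hi⟩ := hne
      unfold dotp
      apply Finset.sum_pos' (fun j _ => mul_self_nonneg _)
      exact ⟨i, Finset.mem_univ i, mul_self_pos.mpr hi⟩
    nlinarith
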